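/- arXiv:0907.5565 — 3 statements merged into one kernel-verified Lean document; each statement's English description precedes it below -/
import Mathlib

section
/- If a quaternionic power series f(q) = Σₙ qⁿ aₙ converges on the ball B(0,R), then for every imaginary unit I ∈ S the restriction of f to B(0,R) ∩ L_I satisfies the Cauchy–Riemann equation (∂/∂x + I ∂/∂y) f(x + yI) = 0. -/
noncomputable section

abbrev H := Quaternion ℝ

/-- The sphere of quaternion imaginary units. -/
def Sph : Set H := {q : H | q ^ 2 = -1}

/-- The complex line (Slice) through 1 and `I`. -/
def Slice (I : H) : Set H := {q : H | ∃ x y : ℝ, q = (x : H) + y • I}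

/-- The 2-sphere `x + y𝕊`. -/
def sphSet (x y : ℝ) : Set H := {q : H | ∃ I ∈ Sph, q = (x : H) + y • I}

/-- The real axis inside the quaternions. -/
def realAxis : Set H := {q : H | ∃ r : ℝ, q = (r : H)}

/-- `f` is holomorphic on the `I`-Slice of `Ω`: at every point of `Ω ∩ L_I` the
map `(x,y) ↦ f(x+yI)` is (real) differentiable and satisfies the
Cauchy–Riemann equation `∂f/∂x + I ∂f/∂y = 0`. -/
def HoloSlice (Ω : Set H) (f : H → H) (I : H) : Prop :=
  ∀ x y : ℝ, (x : H) + y • I ∈ Ω →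
    DifferentiableAt ℝ (fun p : ℝ × ℝ => f ((p.1 : H) + p.2 • I)) (x, y) ∧
    fderiv ℝ (fun p : ℝ × ℝ => f ((p.1 : H) + p.2 • I)) (x, y) (1, 0)
      + I * fderiv ℝ (fun p : ℝ × ℝ => f ((p.1 : H) + p.2 • I)) (x, y) (0, 1) = 0

/-- Slice regular functions: every Slice restriction is holomorphic. -/
def SliceRegular (Ω : Set H) (f : H → H) : Prop :=
  ∀ I ∈ Sph, HoloSlice Ω f I

/-- A Slice domain: a domain intersecting the real axis whose slices are domains. -/
def IsSliceDomain (Ω : Set H) : Prop :=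
  IsOpen Ω ∧ IsConnected Ω ∧ (Ω ∩ realAxis).Nonempty ∧
  ∀ I ∈ Sph, IsConnected (Ω ∩ Slice I)

/-- Axially symmetric set. -/
def AxSymm (C : Set H) : Prop :=
  ∀ (x y : ℝ), ∀ I ∈ Sph, (x : H) + y • I ∈ C → ∀ J ∈ Sph, (x : H) + y • J ∈ C

/-- Symmetric Slice domain. -/
def IsSymmSliceDomain (Ω : Set H) : Prop := IsSliceDomain Ω ∧ AxSymm Ω

/-- Orthogonality of quaternions w.r.t. the Euclidean inner product `re (p * star q)`. -/
def Orth (I J : H) : Prop := (I * star J).re = 0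

/-- `F, G` give a splitting `f = F + G J` of `f` on the Slice `Ω ∩ L_I`,
with `F, G` holomorphic and `L_I`-valued. -/
structure IsSplitting (Ω : Set H) (f : H → H) (I J : H) (F G : H → H) : Prop where
  mapsF : ∀ q ∈ Ω ∩ Slice I, F q ∈ Slice I
  mapsG : ∀ q ∈ Ω ∩ Slice I, G q ∈ Slice I
  holoF : HoloSlice Ω F I
  holoG : HoloSlice Ω G I
  eq : ∀ q ∈ Ω ∩ Slice I, f q = F q + G q * J

/-- `h` is the regular product `f * g`: it is Slice regular and restricts on some
Slice `L_I` (with `I ⊥ J`, splittings `f = F + GJ`, `g = F' + G'J`) to the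
product formula.  (Note `star` is quaternionic conjugation, which restricts to
complex conjugation on each Slice.) -/
def IsRegularProduct (Ω : Set H) (f g h : H → H) : Prop :=
  SliceRegular Ω h ∧
  ∃ I ∈ Sph, ∃ J ∈ Sph, Orth I J ∧
    ∃ F G F' G' : H → H, IsSplitting Ω f I J F G ∧ IsSplitting Ω g I J F' G' ∧
      ∀ q ∈ Ω ∩ Slice I,
        h q = (F q * F' q - G q * star (G' (star q)))
            + (F q * G' q + G q * star (F' (star q))) * J

/-- `fc` is the regular conjugate of `f`. -/
def IsRegularConj (Ω : Set H) (f fc : H → H) : Prop :=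
  SliceRegular Ω fc ∧
  ∃ I ∈ Sph, ∃ J ∈ Sph, Orth I J ∧
    ∃ F G : H → H, IsSplitting Ω f I J F G ∧
      ∀ q ∈ Ω ∩ Slice I, fc q = star (F (star q)) - G q * J

/-- `fs` is the symmetrization `f^s = f * f^c` of `f`. -/
def IsSymmetrization (Ω : Set H) (f fs : H → H) : Prop :=
  ∃ fc : H → H, IsRegularConj Ω f fc ∧ IsRegularProduct Ω f fc fs

/-- The degenerate set of `f`: union of the spheres `x + y𝕊` (`y ≠ 0`)
contained in `Ω` on which `f` is constant. -/
def DegSet (Ω : Set H) (f : H → H) : Set H :=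
  {q : H | ∃ x y : ℝ, y ≠ 0 ∧ q ∈ sphSet x y ∧ sphSet x y ⊆ Ω ∧
    ∀ p ∈ sphSet x y, ∀ p' ∈ sphSet x y, f p = f p'}


lemma sph_norm {I : H} (hI : I ∈ Sph) : ‖I‖ = 1 := by
  have h1 : Quaternion.normSq I ^ 2 = 1 := by
    have := map_pow Quaternion.normSq I 2
    rw [hI] at this
    simpa using this.symm
  have h2 : Quaternion.normSq I = 1 := by nlinarith [Quaternion.normSq_nonneg (a := I)]
  have h3 : ‖I‖ * ‖I‖ = 1 := by rw [← Quaternion.normSq_eq_norm_mul_self, h2]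
  nlinarith [norm_nonneg I]

lemma aux_pow (L : ℝ × ℝ →L[ℝ] H) (hcomm : ∀ p q : ℝ × ℝ, Commute (L p) (L q))
    (n : ℕ) (p : ℝ × ℝ) :
    HasFDerivAt (fun q : ℝ × ℝ => (L q) ^ n)
      ((n : ℝ) • ((ContinuousLinearMap.mul ℝ H ((L p) ^ (n - 1))).comp L)) p := by
  induction n with
  | zero => simp only [pow_zero]; exact (hasFDerivAt_const (𝕜 := ℝ) (1 : H) p).congr_fderiv (by ext v <;> simp)
  | succ n ih =>
    have h1 := ih.mul' (L.hasFDerivAt (x := p))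
    have h2 : ((fun q : ℝ × ℝ => (L q) ^ n) * (L : ℝ × ℝ → H)) = fun q : ℝ × ℝ => (L q) ^ (n + 1) := by
      funext q; rw [Pi.mul_apply, pow_succ]
    rw [h2] at h1
    refine h1.congr_fderiv ?_
    refine ContinuousLinearMap.ext fun h => ?_
    simp only [ContinuousLinearMap.add_apply, ContinuousLinearMap.smul_apply,
      ContinuousLinearMap.comp_apply, ContinuousLinearMap.mul_apply',
      ContinuousLinearMap.smulRight_apply, ContinuousLinearMap.coe_smul', Pi.smul_apply,
      smul_eq_mul, op_smul_eq_mul]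
    have hc : L h * L p = L p * L h := (hcomm h p).eq
    rcases Nat.eq_zero_or_pos n with hn | hn
    · subst hn; simp
    · have hn1 : n - 1 + 1 = n := Nat.succ_pred_eq_of_pos hn
      have hkey : (L p) ^ (n - 1) * L h * L p = (L p) ^ n * L h := by
        rw [mul_assoc, hc, ← mul_assoc, ← pow_succ, hn1]
      rw [Nat.add_sub_cancel, smul_mul_assoc, hkey]
      push_cast
      rw [add_smul, one_smul]
      abel

set_option maxHeartbeats 1000000 in
/-- a quaternionic power series convergent on `B(0,R)` has
holomorphic restrictions (i.e. satisfies the Cauchy–Riemann equation) on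
every slice. -/
theorem powerSeries_sliceHolomorphic (R : ℝ) (a : ℕ → H) (f : H → H)
    (hconv : ∀ q : H, ‖q‖ < R → HasSum (fun n : ℕ => q ^ n * a n) (f q)) :
    ∀ I ∈ Sph, HoloSlice (Metric.ball (0 : H) R) f I := by
  intro I hI x y hmem
  have hInorm : ‖I‖ = 1 := sph_norm hI
  have hII : I * I = -1 := by rw [← pow_two]; exact hI
  -- the slice embedding as a continuous linear map
  set L : ℝ × ℝ →L[ℝ] H :=
    ((ContinuousLinearMap.fst ℝ ℝ ℝ).smulRight (1 : H)) +
      ((ContinuousLinearMap.snd ℝ ℝ ℝ).smulRight I) with hLdef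
  have hL : ∀ p : ℝ × ℝ, L p = (p.1 : H) + p.2 • I := by
    intro p
    simp only [hLdef, ContinuousLinearMap.add_apply, ContinuousLinearMap.smulRight_apply,
      ContinuousLinearMap.coe_fst', ContinuousLinearMap.coe_snd']
    congr 1
    ext <;> simp [Quaternion.re_one, Quaternion.imI_one, Quaternion.imJ_one, Quaternion.imK_one]
  have hcomm : ∀ p q : ℝ × ℝ, Commute (L p) (L q) := by
    intro p q
    rw [hL, hL]
    have c1 : Commute ((p.1 : H)) ((q.1 : H) + q.2 • I) := Quaternion.coe_commute _ _
    have c2 : Commute I ((q.1 : H) + q.2 • I) :=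
      Commute.add_right (Quaternion.coe_commute q.1 I).symm ((Commute.refl I).smul_right _)
    exact c1.add_left (c2.smul_left _)
  have hLnorm : ∀ p : ℝ × ℝ, ‖L p‖ ≤ 2 * ‖p‖ := by
    intro p
    rw [hL]
    calc ‖(p.1 : H) + p.2 • I‖ ≤ ‖(p.1 : H)‖ + ‖p.2 • I‖ := norm_add_le _ _
    _ = |p.1| + |p.2| := by
        rw [Quaternion.norm_coe, norm_smul, hInorm]; simp [Real.norm_eq_abs]
    _ ≤ ‖p‖ + ‖p‖ := add_le_add (norm_fst_le p) (norm_snd_le p)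
    _ = 2 * ‖p‖ := by ring
  have hz0 : ‖L (x, y)‖ < R := by rw [hL]; simpa [mem_ball_zero_iff] using hmem
  -- radii
  obtain ⟨r, r', hz0r, hrr', hr'R, hr0, hr'0⟩ :
      ∃ r r' : ℝ, ‖L (x, y)‖ < r ∧ r < r' ∧ r' < R ∧ 0 < r ∧ 0 < r' := by
    refine ⟨‖L (x, y)‖ + (R - ‖L (x, y)‖) / 3, ‖L (x, y)‖ + 2 * (R - ‖L (x, y)‖) / 3,
      ?_, ?_, ?_, ?_, ?_⟩ <;> nlinarith [norm_nonneg (L (x, y))]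
  -- bound on coefficients at radius r'
  have hnr' : ‖((r' : ℝ) : H)‖ < R := by
    rw [Quaternion.norm_coe, Real.norm_eq_abs, abs_of_pos hr'0]; exact hr'R
  have hsum' : Summable fun n : ℕ => ((r' : ℝ) : H) ^ n * a n := (hconv _ hnr').summable
  have hten : Filter.Tendsto (fun n : ℕ => ‖((r' : ℝ) : H) ^ n * a n‖) Filter.atTop (nhds 0) := by
    have h := hsum'.tendsto_atTop_zero.norm
    rwa [norm_zero] at h
  obtain ⟨C, hC⟩ := hten.isBoundedUnder_le.bddAbove_range
  simp only [upperBounds, Set.mem_range, Set.mem_setOf_eq, forall_exists_index] at hC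
  have hCb : ∀ n : ℕ, ‖a n‖ * r' ^ n ≤ C := by
    intro n
    have := hC n rfl
    rwa [norm_mul, norm_pow, Quaternion.norm_coe, Real.norm_eq_abs, abs_of_pos hr'0,
      mul_comm] at this
  have hC0 : 0 ≤ C := le_trans (by positivity) (hCb 0)
  -- the summable bound
  set u : ℕ → ℝ := fun n => 2 * (n : ℝ) * r ^ (n - 1) * ‖a n‖ with hudef
  have hq1 : ‖r / r'‖ < 1 := by
    rw [Real.norm_eq_abs, abs_of_pos (div_pos hr0 hr'0)]
    exact (div_lt_one hr'0).2 hrr'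
  have hS : Summable fun n : ℕ => (n : ℝ) * (r / r') ^ (n - 1) := by
    have h1 : Summable fun n : ℕ => ((n : ℝ) + 1) * (r / r') ^ n := by
      have h2 := summable_pow_mul_geometric_of_norm_lt_one 1 hq1
      have h3 := summable_geometric_of_norm_lt_one hq1
      simpa [add_mul, pow_one] using h2.add h3
    apply (summable_nat_add_iff 1).mp
    refine h1.congr fun n => ?_
    push_cast
    simp
  have hu : Summable u := by
    refine Summable.of_nonneg_of_le (fun n => by positivity)
      (fun n => ?_) (hS.mul_left (2 * C / r'))
    rcases Nat.eq_zero_or_pos n with hn | hn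
    · subst hn; simp [hudef]
    · have hn1 : n - 1 + 1 = n := Nat.succ_pred_eq_of_pos hn
      have h5 : ‖a n‖ ≤ C / r' ^ n := (le_div_iff₀ (pow_pos hr'0 n)).2 (hCb n)
      have hrn : r' ^ n = r' ^ (n - 1) * r' := by rw [← pow_succ, hn1]
      calc u n ≤ 2 * (n : ℝ) * r ^ (n - 1) * (C / r' ^ n) := by
            simp only [hudef]; gcongr
        _ = 2 * C / r' * ((n : ℝ) * (r / r') ^ (n - 1)) := by
            rw [div_pow, hrn]
            field_simp
  -- the open convex set
  set s : Set (ℝ × ℝ) := L ⁻¹' Metric.ball (0 : H) r with hsdef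
  have hsopen : IsOpen s := Metric.isOpen_ball.preimage L.continuous
  have hsconn : IsPreconnected s :=
    ((convex_ball (0 : H) r).linear_preimage (L : ℝ × ℝ →ₗ[ℝ] H)).isPreconnected
  have hmem_s : ∀ p ∈ s, ‖L p‖ < r := fun p hp => by
    simpa [hsdef, mem_ball_zero_iff] using hp
  have hxs : (x, y) ∈ s := by simp [hsdef, mem_ball_zero_iff, hz0r]
  -- the derivative candidates
  set d : ℕ → ℝ × ℝ → (ℝ × ℝ →L[ℝ] H) := fun n p =>
    ((n : ℝ) • ((ContinuousLinearMap.mul ℝ H ((L p) ^ (n - 1))).comp L)).smulRight (a n)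
    with hddef
  have hd_apply : ∀ n p v, d n p v = (n : ℝ) • ((L p) ^ (n - 1) * L v * a n) := by
    intro n p v
    simp [hddef, smul_mul_assoc]
  have hder : ∀ (n : ℕ) (p : ℝ × ℝ), p ∈ s →
      HasFDerivAt (fun q : ℝ × ℝ => (L q) ^ n * a n) (d n p) p := by
    intro n p _
    exact (aux_pow L hcomm n p).mul_const' (a n)
  have hbound : ∀ (n : ℕ) (p : ℝ × ℝ), p ∈ s → ‖d n p‖ ≤ u n := by
    intro n p hp
    refine ContinuousLinearMap.opNorm_le_bound _ (by positivity) fun v => ?_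
    rw [hd_apply, norm_smul, norm_mul, norm_mul, norm_pow]
    rw [Real.norm_natCast]
    calc (n : ℝ) * (‖L p‖ ^ (n - 1) * ‖L v‖ * ‖a n‖)
        ≤ (n : ℝ) * (r ^ (n - 1) * (2 * ‖v‖) * ‖a n‖) := by
          gcongr
          · exact (hmem_s p hp).le
          · exact hLnorm v
      _ = u n * ‖v‖ := by rw [hudef]; ring
  -- the sum converges at the center
  have hsum0 : Summable fun n : ℕ => (L (x, y)) ^ n * a n :=
    (hconv _ (lt_trans hz0r (lt_trans hrr' hr'R))).summable
  have key : HasFDerivAt (fun p : ℝ × ℝ => ∑' n : ℕ, (L p) ^ n * a n)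
      (∑' n : ℕ, d n (x, y)) (x, y) :=
    hasFDerivAt_tsum_of_isPreconnected hu hsopen hsconn hder hbound hxs hsum0 hxs
  have heq : (fun p : ℝ × ℝ => f ((p.1 : H) + p.2 • I)) =ᶠ[nhds (x, y)]
      (fun p : ℝ × ℝ => ∑' n : ℕ, (L p) ^ n * a n) := by
    filter_upwards [hsopen.mem_nhds hxs] with p hp
    have hpR : ‖L p‖ < R := lt_trans (hmem_s p hp) (lt_trans hrr' hr'R)
    rw [← hL p]
    exact ((hconv _ hpR).tsum_eq).symm
  have keyf : HasFDerivAt (fun p : ℝ × ℝ => f ((p.1 : H) + p.2 • I))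
      (∑' n : ℕ, d n (x, y)) (x, y) := key.congr_of_eventuallyEq heq
  refine ⟨keyf.differentiableAt, ?_⟩
  rw [keyf.fderiv]
  have hsumd : Summable fun n : ℕ => d n (x, y) :=
    Summable.of_norm_bounded (E := ℝ × ℝ →L[ℝ] H) hu fun n => hbound n _ hxs
  have e : ∀ v : ℝ × ℝ, (∑' n : ℕ, d n (x, y)) v = ∑' n : ℕ, d n (x, y) v := fun v =>
    (ContinuousLinearMap.apply ℝ H v).map_tsum hsumd
  rw [e (1, 0), e (0, 1)]
  have hL10 : L ((1 : ℝ), (0 : ℝ)) = 1 := by rw [hL]; simp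
  have hL01 : L ((0 : ℝ), (1 : ℝ)) = I := by rw [hL]; simp
  have hIz : Commute I (L (x, y)) := by
    have := hcomm (0, 1) (x, y); rwa [hL01] at this
  -- summability of the second evaluated series
  have hBsum : Summable fun n : ℕ => d n (x, y) ((0 : ℝ), (1 : ℝ)) := by
    refine Summable.of_norm_bounded (E := H) hu fun n => ?_
    calc ‖d n (x, y) (0, 1)‖ ≤ ‖d n (x, y)‖ * ‖((0 : ℝ), (1 : ℝ))‖ :=
          ContinuousLinearMap.le_opNorm _ _
      _ ≤ u n * 1 := by
          refine mul_le_mul (hbound n _ hxs) ?_ (norm_nonneg _) ?_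
          · rw [Prod.norm_def]; simp
          · exact le_trans (norm_nonneg (d n (x, y))) (hbound n _ hxs)
      _ = u n := mul_one _
  have hmt : I * (∑' n : ℕ, d n (x, y) ((0 : ℝ), (1 : ℝ)))
      = ∑' n : ℕ, I * d n (x, y) ((0 : ℝ), (1 : ℝ)) := by
    simpa using (ContinuousLinearMap.mul ℝ H I).map_tsum hBsum
  rw [hmt]
  have hterm : ∀ n : ℕ, I * d n (x, y) ((0 : ℝ), (1 : ℝ))
      = -(d n (x, y) ((1 : ℝ), (0 : ℝ))) := by
    intro n
    rw [hd_apply, hd_apply, hL10, hL01, mul_one]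
    rw [mul_smul_comm]
    have h1 : I * ((L (x, y)) ^ (n - 1) * I * a n) = (L (x, y)) ^ (n - 1) * (I * I) * a n := by
      rw [← mul_assoc, ← mul_assoc, (hIz.pow_right (n - 1)).eq, mul_assoc (L (x, y) ^ (n - 1)) I I]
    rw [h1, hII]
    simp [mul_assoc]
  rw [tsum_congr hterm, tsum_neg]
  simp
end
end

section
/- Let Ω ⊆ ℍ be a symmetric slice domain and f : Ω → ℍ a slice regular function. Then for each sphere x + yS ⊂ Ω there exist quaternions b and c such that f(x + yI) = b + I c for all I ∈ S; i.e., the map I ↦ f(x+yI) is affine in I. -/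
noncomputable section

lemma sph_mul_self {J : H} (hJ : J ∈ Sph) : J * J = -1 := by
  rw [← sq]; exact hJ

lemma sph_re {J : H} (hJ : J ∈ Sph) : J.re = 0 := by
  have h := sph_mul_self hJ
  have h1 : (J * J).re = (-1 : H).re := by rw [h]
  have h2 : (J * J).imI = (-1 : H).imI := by rw [h]
  have h3 : (J * J).imJ = (-1 : H).imJ := by rw [h]
  have h4 : (J * J).imK = (-1 : H).imK := by rw [h]
  simp [Quaternion.re_mul, Quaternion.imI_mul, Quaternion.imJ_mul, Quaternion.imK_mul,
    Quaternion.re_one, Quaternion.imI_one, Quaternion.imJ_one, Quaternion.imK_one] at h1 h2 h3 h4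
  nlinarith [sq_nonneg J.re, sq_nonneg J.imI, sq_nonneg J.imJ, sq_nonneg J.imK]

lemma sph_normSq {J : H} (hJ : J ∈ Sph) : Quaternion.normSq J = 1 := by
  have h := sph_mul_self hJ
  have : Quaternion.normSq J * Quaternion.normSq J = 1 := by
    have := congrArg Quaternion.normSq h
    simpa using this
  nlinarith [Quaternion.normSq_nonneg (a := J)]

lemma sph_norm_comb {J : H} (hJ : J ∈ Sph) (x y : ℝ) :
    ‖(x : H) + y • J‖ = Real.sqrt (x ^ 2 + y ^ 2) := by
  have h1 : Quaternion.normSq ((x : H) + y • J) = x ^ 2 + y ^ 2 := by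
    have hre := sph_re hJ
    have hns := sph_normSq hJ
    rw [Quaternion.normSq_def'] at hns ⊢
    simp [hre] at hns ⊢
    nlinarith [hns]
  rw [norm_eq_sqrt_real_inner, Quaternion.inner_self, h1]

/-- The embedding `ℂ → H` determined by an imaginary unit `J`. -/
def phiC (J : H) (z : ℂ) : H := (z.re : H) + z.im • J

lemma phiC_ring {J : H} (hJ : J ∈ Sph) : ∀ z w : ℂ,
    phiC J (z * w) = phiC J z * phiC J w := by
  intro z w
  have hsm : ∀ (r : ℝ) (q : H), r • q = (r : H) * q := fun r q => by
    rw [← Quaternion.coe_mul_eq_smul]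
  simp only [phiC, hsm, Complex.mul_re, Complex.mul_im]
  have hc : ∀ r : ℝ, (r : H) * J = J * (r : H) := fun r =>
    (Quaternion.coe_commutes r J)
  push_cast
  simp only [add_mul, mul_add]
  have e1 : (z.im:H)*J*(w.re:H) = (z.im:H)*(w.re:H)*J := by
    rw [mul_assoc, ← hc w.re, ← mul_assoc]
  have e2 : (z.im:H)*J*((w.im:H)*J) = -((z.im:H)*(w.im:H)) := by
    rw [← mul_assoc, mul_assoc (z.im:H) J (w.im:H), ← hc w.im, ← mul_assoc,
      mul_assoc, sph_mul_self hJ, mul_neg_one]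
  have e3 : (z.re:H)*((w.im:H)*J) = (z.re:H)*(w.im:H)*J := by rw [mul_assoc]
  rw [e1, e2, e3]
  abel

lemma phiC_norm {J : H} (hJ : J ∈ Sph) (z : ℂ) : ‖phiC J z‖ = ‖z‖ := by
  rw [phiC, sph_norm_comb hJ, Complex.norm_def, Complex.normSq_apply]
  ring_nf

/-- `phiC J` as a ring homomorphism. -/
def phiRH (J : H) (hJ : J ∈ Sph) : ℂ →+* H where
  toFun := phiC J
  map_one' := by simp [phiC]
  map_mul' := phiC_ring hJ
  map_zero' := by simp [phiC]
  map_add' := fun z w => by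
    simp only [phiC, Complex.add_re, Complex.add_im, Complex.ofReal_add, add_smul]
    push_cast
    abel

section CStruct
variable (J : H) (hJ : J ∈ Sph)

def cMod : Module ℂ H := Module.compHom H (phiRH J hJ)

lemma cMod_smul_def (z : ℂ) (q : H) :
    (letI := cMod J hJ; z • q) = phiC J z * q := rfl

def cNorm : NormedSpace ℂ H :=
  { cMod J hJ with
    norm_smul_le := fun z q => by
      have : (cMod J hJ).toSMul = (cMod J hJ).toSMul := rfl
      show ‖phiC J z * q‖ ≤ ‖z‖ * ‖q‖
      rw [norm_mul, phiC_norm hJ] }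

def cTower : @IsScalarTower ℝ ℂ H _ ((cMod J hJ).toSMul) _ := by
  letI := cMod J hJ
  refine ⟨fun r z q => ?_⟩
  show phiC J (r • z) * q = r • (phiC J z * q)
  have h1 : phiC J (r • z) = r • phiC J z := by
    simp only [phiC, Complex.smul_re, Complex.smul_im, smul_add, smul_smul]
    push_cast
    simp [Quaternion.smul_coe, mul_smul]
  rw [h1, smul_mul_assoc]
end CStruct



lemma cr_solve {J u v : H} (hJ2 : J * J = -1) (h : u + J * v = 0) : v = J * u := by
  have h2 := congrArg (fun q => J * q) h
  simp only [mul_add, ← mul_assoc, hJ2, neg_one_mul, mul_zero] at h2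
  have h3 : J * u - v = 0 := by rw [← h2]; abel
  symm; rwa [← sub_eq_zero]

lemma cr_alg (J I0 a b c : H) (hJ2 : J * J = -1) (hI2 : I0 * I0 = -1) :
    (J * a + J * a) - (I0 * b + -(I0 * c)) + (J * I0) * (I0 * b - -(I0 * c))
      = J * ((a + a) - (b + c) + (J * I0) * (b - c)) := by
  have hJx : ∀ x : H, J * (J * x) = -x := fun x => by rw [← mul_assoc, hJ2, neg_one_mul]
  have hIx : ∀ x : H, I0 * (I0 * x) = -x := fun x => by rw [← mul_assoc, hI2, neg_one_mul]
  simp only [mul_add, mul_sub, mul_neg, sub_neg_eq_add, mul_assoc, hJx, hIx]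
  abel

set_option maxHeartbeats 1600000 in
lemma rep_on_slice (Ω : Set H) (hopen : IsOpen Ω) (f : H → H)
    (J : H) (hJ : J ∈ Sph) (hcon : IsConnected (Ω ∩ Slice J))
    (I0 : H) (hI0 : I0 ∈ Sph)
    (hfJ : HoloSlice Ω f J) (hfI : HoloSlice Ω f I0)
    (hsym : ∀ s t : ℝ, (s : H) + t • J ∈ Ω →
      ((s : H) + t • I0 ∈ Ω ∧ (s : H) + (-t) • I0 ∈ Ω))
    (r : ℝ) (hr : (r : H) ∈ Ω)
    (x y : ℝ) (hxy : (x : H) + y • J ∈ Ω) :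
    f ((x : H) + y • J)
      = (2⁻¹ : ℝ) • (f ((x : H) + y • I0) + f ((x : H) + (-y) • I0))
        + J * ((-(2⁻¹ : ℝ)) • (I0 * (f ((x : H) + y • I0) - f ((x : H) + (-y) • I0)))) := by
  classical
  have hJ2 := sph_mul_self hJ
  have hI2 := sph_mul_self hI0
  letI instMod : Module ℂ H := cMod J hJ
  letI instNS : NormedSpace ℂ H := cNorm J hJ
  letI instTow : IsScalarTower ℝ ℂ H := cTower J hJ
  set K : ℝ × ℝ → H := fun p => f ((p.1 : H) + p.2 • J) with hKdef
  set F : ℝ × ℝ → H := fun p => f ((p.1 : H) + p.2 • I0) with hFdef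
  set G : ℝ × ℝ → H := fun p => F (p.1, -p.2) with hGdef
  set h : ℝ × ℝ → H := fun p => (K p + K p) - (F p + G p) + (J * I0) * (F p - G p) with hhdef
  set σ : ℝ × ℝ →L[ℝ] ℝ × ℝ :=
    (ContinuousLinearMap.fst ℝ ℝ ℝ).prod (-(ContinuousLinearMap.snd ℝ ℝ ℝ)) with hσdef
  -- pointwise derivative with CR
  have key : ∀ s t : ℝ, (s : H) + t • J ∈ Ω →
      ∃ D : ℝ × ℝ →L[ℝ] H, HasFDerivAt h D (s, t) ∧ D (0, 1) = J * D (1, 0) := by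
    intro s t hp
    obtain ⟨hpI, hpI'⟩ := hsym s t hp
    obtain ⟨hKd, hKcr⟩ := hfJ s t hp
    obtain ⟨hFd, hFcr⟩ := hfI s t hpI
    obtain ⟨hFd', hFcr'⟩ := hfI s (-t) hpI'
    set DK := fderiv ℝ K (s, t) with hDK
    set DF := fderiv ℝ F (s, t) with hDF
    set DF' := fderiv ℝ F (s, -t) with hDF'
    have hK' : HasFDerivAt K DK (s, t) := hKd.hasFDerivAt
    have hF : HasFDerivAt F DF (s, t) := hFd.hasFDerivAt
    have hF' : HasFDerivAt F DF' (s, -t) := hFd'.hasFDerivAt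
    have hσ : HasFDerivAt (fun p : ℝ × ℝ => ((p.1, -p.2) : ℝ × ℝ)) σ (s, t) :=
      (hasFDerivAt_fst.prodMk hasFDerivAt_snd.neg)
    have hG : HasFDerivAt G (DF'.comp σ) (s, t) := HasFDerivAt.comp (s, t) (g := F) hF' hσ
    have hasDh : HasFDerivAt h (((DK + DK) - (DF + DF'.comp σ)) + (J * I0) • (DF - DF'.comp σ))
        (s, t) := ((hK'.add hK').sub (hF.add hG)).add ((hF.sub hG).const_mul (J * I0))
    refine ⟨_, hasDh, ?_⟩
    have hσ10 : σ (1, 0) = ((1 : ℝ), (0 : ℝ)) := by simp [hσdef]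
    have hσ01 : σ (0, 1) = ((0 : ℝ), (-1 : ℝ)) := by simp [hσdef]
    have hm : ((0 : ℝ), (-1 : ℝ)) = -((0 : ℝ), (1 : ℝ)) := by simp [Prod.ext_iff]
    have hKv : DK (0, 1) = J * DK (1, 0) := cr_solve hJ2 hKcr
    have hFv : DF (0, 1) = I0 * DF (1, 0) := cr_solve hI2 hFcr
    have hFv' : DF' (0, 1) = I0 * DF' (1, 0) := cr_solve hI2 hFcr'
    simp only [ContinuousLinearMap.add_apply, ContinuousLinearMap.sub_apply,
      ContinuousLinearMap.smul_apply, ContinuousLinearMap.coe_comp', Function.comp_apply,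
      hσ10, hσ01, hm, map_neg, hKv, hFv, hFv', smul_eq_mul]
    exact cr_alg J I0 (DK (1, 0)) (DF (1, 0)) (DF' (1, 0)) hJ2 hI2
  -- complex reformulation
  set U' : Set ℂ := {z : ℂ | (z.re : H) + z.im • J ∈ Ω} with hU'def
  set hc : ℂ → H := fun z => h (z.re, z.im) with hcdef
  have hU'open : IsOpen U' := by
    have hcont : Continuous fun z : ℂ => (z.re : H) + z.im • J :=
      ((Quaternion.continuous_coe.comp Complex.continuous_re).add
        (Complex.continuous_im.smul continuous_const))
    exact hopen.preimage hcont
  have hdiff : ∀ z ∈ U', DifferentiableAt ℂ hc z := by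
    intro z hz
    obtain ⟨D, hD, hDcr⟩ := key z.re z.im hz
    have hR : HasFDerivAt hc (D.comp (Complex.equivRealProdCLM : ℂ →L[ℝ] ℝ × ℝ)) z := by
      have : HasFDerivAt (fun w : ℂ => h (w.re, w.im))
          (D.comp (Complex.equivRealProdCLM : ℂ →L[ℝ] ℝ × ℝ)) z :=
        HasFDerivAt.comp z (g := h) (by simpa using hD) Complex.equivRealProdCLM.hasFDerivAt
      exact this
    haveI : IsBoundedSMul ℂ H := NormedSpace.toIsBoundedSMul
    set L : ℂ →L[ℂ] H := ContinuousLinearMap.toSpanSingleton ℂ (D (1, 0)) with hLdef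
    have hLeq : L.restrictScalars ℝ = D.comp (Complex.equivRealProdCLM : ℂ →L[ℝ] ℝ × ℝ) := by
      refine ContinuousLinearMap.ext fun z' => ?_
      show z' • D (1, 0) = D (Complex.equivRealProdCLM z')
      have hz' : (Complex.equivRealProdCLM z' : ℝ × ℝ)
          = z'.re • ((1 : ℝ), (0 : ℝ)) + z'.im • ((0 : ℝ), (1 : ℝ)) := by
        simp [Prod.ext_iff]
      rw [hz', map_add, map_smul, map_smul, hDcr]
      show phiC J z' * D (1, 0) = _
      rw [phiC, add_mul]
      simp [mul_assoc, Quaternion.coe_mul_eq_smul, smul_mul_assoc]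
    exact (hasFDerivAt_of_restrictScalars ℝ hR hLeq).differentiableAt
  have han : AnalyticOnNhd ℂ hc U' :=
    DifferentiableOn.analyticOnNhd (fun z hz => (hdiff z hz).differentiableWithinAt) hU'open
  -- preconnectedness of U'
  have hinj : Function.Injective (phiC J) := by
    intro z w hzw
    have h0 : phiC J (z - w) = 0 := by
      have := (phiRH J hJ).map_sub z w
      simpa [phiRH, hzw] using this
    have := phiC_norm hJ (z - w)
    rw [h0] at this
    simp only [norm_zero] at this
    have : ‖z - w‖ = 0 := this.symm
    rw [norm_eq_zero, sub_eq_zero] at this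
    exact this
  have hpre : IsPreconnected U' := by
    set φLM : ℂ →ₗ[ℝ] H :=
      { toFun := phiC J
        map_add' := fun z w => (phiRH J hJ).map_add z w
        map_smul' := fun r z => by
          simp only [phiC, Complex.smul_re, Complex.smul_im, RingHom.id_apply, smul_add,
            smul_smul]
          push_cast
          simp [Quaternion.smul_coe, mul_smul] } with hφLM
    have hker : LinearMap.ker φLM = ⊥ := LinearMap.ker_eq_bot.mpr hinj
    have hemb : Topology.IsClosedEmbedding φLM := LinearMap.isClosedEmbedding_of_injective hker
    have himg : (phiC J) '' U' = Ω ∩ Slice J := by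
      ext q
      constructor
      · rintro ⟨z, hz, rfl⟩
        exact ⟨hz, ⟨z.re, z.im, rfl⟩⟩
      · rintro ⟨hqΩ, x', y', rfl⟩
        refine ⟨⟨x', y'⟩, ?_, ?_⟩
        · show ((Complex.mk x' y').re : H) + (Complex.mk x' y').im • J ∈ Ω
          simpa using hqΩ
        · simp [phiC]
    have himage := (hemb.isInducing.isPreconnected_image (s := U'))
    rw [show ⇑φLM = phiC J from rfl, himg] at himage
    exact himage.mp hcon.isPreconnected
  -- the point on the real axis and vanishing there
  have h0 : ∀ s : ℝ, hc (s : ℂ) = 0 := by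
    intro s
    show h ((s:ℂ).re, (s:ℂ).im) = 0
    rw [hhdef]
    simp [hKdef, hFdef, hGdef]
  have hrU' : (r : ℂ) ∈ U' := by
    show (((r:ℂ).re : ℝ) : H) + (r:ℂ).im • J ∈ Ω
    simpa using hr
  have hfreq : ∃ᶠ z in nhdsWithin (r : ℂ) {(r:ℂ)}ᶜ, hc z = 0 := by
    have htend : Filter.Tendsto (fun s : ℝ => (s : ℂ)) (nhdsWithin r {r}ᶜ)
        (nhdsWithin (r : ℂ) {(r:ℂ)}ᶜ) := by
      rw [tendsto_nhdsWithin_iff]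
      constructor
      · exact (Complex.continuous_ofReal.tendsto r).mono_left nhdsWithin_le_nhds
      · exact eventually_mem_nhdsWithin.mono fun s hs => by
          simpa [Set.mem_compl_iff, Complex.ofReal_inj] using hs
    exact htend.frequently (Filter.Frequently.of_forall fun s => h0 s)
  have heq := han.eqOn_zero_of_preconnected_of_frequently_eq_zero hpre hrU' hfreq
  -- evaluate at x + y I
  have hz1 : (Complex.mk x y) ∈ U' := by
    show ((Complex.mk x y).re : H) + (Complex.mk x y).im • J ∈ Ω
    simpa using hxy
  have hval0 : hc (Complex.mk x y) = 0 := heq hz1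
  have hval' : f ((x:H) + y • J) + f ((x:H) + y • J)
      - (f ((x:H) + y • I0) + f ((x:H) + (-y) • I0))
      + (J * I0) * (f ((x:H) + y • I0) - f ((x:H) + (-y) • I0)) = 0 := hval0
  set Q := f ((x : H) + y • J) with hQ
  set P := f ((x : H) + y • I0) with hP
  set M := f ((x : H) + (-y) • I0) with hM
  have hval2 : Q + Q = (P + M) - (J * I0) * (P - M) := by
    linear_combination (norm := abel) hval'
  have hhalf : Q = (2⁻¹ : ℝ) • (Q + Q) := by
    rw [smul_add, ← add_smul]
    norm_num
  rw [hhalf, hval2, smul_sub, sub_eq_add_neg, mul_assoc]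
  rw [mul_smul_comm, neg_smul]


lemma sph_neg {I : H} (hI : I ∈ Sph) : -I ∈ Sph := by
  show (-I) ^ 2 = -1
  rw [neg_sq]; exact hI

lemma i_mem_sph : (⟨0, 1, 0, 0⟩ : H) ∈ Sph := by
  show (⟨0, 1, 0, 0⟩ : H) ^ 2 = -1
  erw [sq]
  ext <;> simp [Quaternion.re_mul, Quaternion.imI_mul, Quaternion.imJ_mul, Quaternion.imK_mul]

/-- Representation formula: on each sphere `x + y𝕊 ⊂ Ω`,
`I ↦ f(x + yI)` is affine: `f(x+yI) = b + I c`. -/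
theorem representation_formula (Ω : Set H) (hΩ : IsSymmSliceDomain Ω)
    (f : H → H) (hf : SliceRegular Ω f) (x y : ℝ) (hs : sphSet x y ⊆ Ω) :
    ∃ b c : H, ∀ I ∈ Sph, f ((x : H) + y • I) = b + I * c := by
  obtain ⟨⟨hopen, _, ⟨q0, hq0Ω, r, hq0r⟩, hslices⟩, hsymm⟩ := hΩ
  set I0 : H := ⟨0, 1, 0, 0⟩ with hI0def
  have hI0 : I0 ∈ Sph := i_mem_sph
  refine ⟨(2⁻¹ : ℝ) • (f ((x : H) + y • I0) + f ((x : H) + (-y) • I0)),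
    (-(2⁻¹ : ℝ)) • (I0 * (f ((x : H) + y • I0) - f ((x : H) + (-y) • I0))), ?_⟩
  intro J hJ
  have hr : (r : H) ∈ Ω := by rw [← hq0r]; exact hq0Ω
  have hxy : (x : H) + y • J ∈ Ω := hs ⟨J, hJ, rfl⟩
  refine rep_on_slice Ω hopen f J hJ (hslices J hJ) I0 hI0 (hf J hJ) (hf I0 hI0) ?_ r hr x y hxy
  intro s t hp
  refine ⟨hsymm s t J hJ hp I0 hI0, ?_⟩
  have := hsymm s t J hJ hp (-I0) (sph_neg hI0)
  rw [smul_neg, ← neg_smul] at this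
  exact this
end
end

section
/- Let Ω ⊆ ℍ be a symmetric slice domain and f, g : Ω → ℍ slice regular. For q ∈ Ω, the regular product satisfies: f*g(q) = 0 if f(q) = 0, and f*g(q) = f(q) · g(f(q)⁻¹ q f(q)) if f(q) ≠ 0. Consequently f*g(q) = 0 if and only if f(q) = 0, or f(q) ≠ 0 and g(f(q)⁻¹ q f(q)) = 0. -/
noncomputable section

namespace Aux

lemma mem_sph_iff (q : H) : q ∈ Sph ↔ q.re = 0 ∧ q.imI^2 + q.imJ^2 + q.imK^2 = 1 := by
  constructor
  · intro h
    have h' : q * q = -1 := by rw [← pow_two]; exact h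
    have hre : (q*q).re = (-1 : H).re := by rw [h']
    have hi : (q*q).imI = (-1 : H).imI := by rw [h']
    have hj : (q*q).imJ = (-1 : H).imJ := by rw [h']
    have hk : (q*q).imK = (-1 : H).imK := by rw [h']
    simp [Quaternion.re_mul, Quaternion.imI_mul, Quaternion.imJ_mul, Quaternion.imK_mul, Quaternion.re_one, Quaternion.imI_one, Quaternion.imJ_one, Quaternion.imK_one] at hre hi hj hk
    have h0 : q.re = 0 := by nlinarith [sq_nonneg q.re, sq_nonneg q.imI, sq_nonneg q.imJ, sq_nonneg q.imK]
    refine ⟨h0, by nlinarith⟩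
  · rintro ⟨h0, h1⟩
    rw [Sph, Set.mem_setOf_eq, pow_two]
    ext <;> simp [Quaternion.re_mul, Quaternion.imI_mul, Quaternion.imJ_mul, Quaternion.imK_mul, Quaternion.re_one, Quaternion.imI_one, Quaternion.imJ_one, Quaternion.imK_one, h0] <;> nlinarith

lemma sph_re {I : H} (hI : I ∈ Sph) : I.re = 0 := ((mem_sph_iff I).1 hI).1

lemma sph_normSq {I : H} (hI : I ∈ Sph) : I.imI^2 + I.imJ^2 + I.imK^2 = 1 :=
  ((mem_sph_iff I).1 hI).2

lemma star_sph {I : H} (hI : I ∈ Sph) : star I = -I := by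
  have h0 := sph_re hI
  ext <;> simp [h0]

lemma sph_mul_self {I : H} (hI : I ∈ Sph) : I * I = -1 := by
  have := hI; rwa [Sph, Set.mem_setOf_eq, pow_two] at this

lemma sph_neg {I : H} (hI : I ∈ Sph) : -I ∈ Sph := by
  have := sph_mul_self hI
  rw [Sph, Set.mem_setOf_eq, pow_two, neg_mul_neg]
  exact this

lemma anticomm {I J : H} (hI : I ∈ Sph) (hJ : J ∈ Sph) (h : (I * star J).re = 0) :
    J * I = -(I * J) := by
  have hI0 := sph_re hI; have hJ0 := sph_re hJ
  have h' : I.imI*J.imI + I.imJ*J.imJ + I.imK*J.imK = 0 := by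
    simp [Quaternion.re_mul, hI0, hJ0] at h; linarith
  ext <;> simp [Quaternion.re_mul, Quaternion.imI_mul, Quaternion.imJ_mul, Quaternion.imK_mul, hI0, hJ0] <;> linarith

lemma sph_conj {I' : H} (hI' : I' ∈ Sph) {p : H} (hp : p ≠ 0) : p⁻¹ * I' * p ∈ Sph := by
  rw [Sph, Set.mem_setOf_eq, pow_two]
  have h1 : (p⁻¹ * I' * p) * (p⁻¹ * I' * p) = p⁻¹ * (I' * (p * p⁻¹) * I') * p := by
    noncomm_ring
  rw [h1, mul_inv_cancel₀ hp, mul_one, sph_mul_self hI']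
  rw [mul_neg_one, neg_mul, inv_mul_cancel₀ hp]

lemma conj_point {I' : H} {p : H} (hp : p ≠ 0) (x y : ℝ) :
    p⁻¹ * ((x : H) + y • I') * p = (x : H) + y • (p⁻¹ * I' * p) := by
  rw [mul_add, add_mul]
  congr 1
  · rw [← Quaternion.coe_commutes, mul_assoc, inv_mul_cancel₀ hp, mul_one]
  · rw [mul_smul_comm, smul_mul_assoc, mul_assoc]

lemma star_point {I : H} (hI : I ∈ Sph) (x y : ℝ) :
    star ((x : H) + y • I) = (x : H) + (-y) • I := by
  have h0 := sph_re hI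
  ext <;>
    simp [Quaternion.re_smul, Quaternion.imI_smul, Quaternion.imJ_smul, Quaternion.imK_smul,
      h0] <;>
    ring

lemma exists_decomp (q : H) : ∃ x y : ℝ, ∃ I' : H, I' ∈ Sph ∧ q = (x : H) + y • I' := by
  set n := Real.sqrt (q.imI^2 + q.imJ^2 + q.imK^2) with hn
  have hsum : 0 ≤ q.imI^2 + q.imJ^2 + q.imK^2 := by positivity
  by_cases h0 : n = 0
  · have hz : q.imI^2 + q.imJ^2 + q.imK^2 = 0 := by
      have := Real.sqrt_eq_zero hsum |>.mp h0
      exact this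
    have h1 : q.imI = 0 := by nlinarith [sq_nonneg q.imI, sq_nonneg q.imJ, sq_nonneg q.imK]
    have h2 : q.imJ = 0 := by nlinarith [sq_nonneg q.imI, sq_nonneg q.imJ, sq_nonneg q.imK]
    have h3 : q.imK = 0 := by nlinarith [sq_nonneg q.imI, sq_nonneg q.imJ, sq_nonneg q.imK]
    refine ⟨q.re, 0, @id H ⟨0, 1, 0, 0⟩, ?_, ?_⟩
    · rw [mem_sph_iff]
      refine ⟨rfl, ?_⟩
      show (1:ℝ)^2 + (0:ℝ)^2 + (0:ℝ)^2 = 1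
      norm_num
    · ext <;> simp [h1, h2, h3]
  · have hn2 : n^2 = q.imI^2 + q.imJ^2 + q.imK^2 := Real.sq_sqrt hsum
    refine ⟨q.re, n, @id H ⟨0, q.imI / n, q.imJ / n, q.imK / n⟩, ?_, ?_⟩
    · rw [mem_sph_iff]
      refine ⟨rfl, ?_⟩
      show (q.imI / n)^2 + (q.imJ / n)^2 + (q.imK / n)^2 = 1
      rw [div_pow, div_pow, div_pow, ← add_div, ← add_div, ← hn2]
      exact div_self (by positivity)
    · ext <;>
        simp [Quaternion.re_smul, Quaternion.imI_smul, Quaternion.imJ_smul,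
          Quaternion.imK_smul] <;> simp only [id, or_true] <;>
        field_simp

/-! ### The embedding of `ℂ` into a slice -/

def eS (I : H) (z : ℂ) : H := (z.re : H) + z.im • I

lemma eS_add (I : H) (z w : ℂ) : eS I (z + w) = eS I z + eS I w := by
  simp only [eS, Complex.add_re, Complex.add_im]; push_cast; rw [add_smul]; abel

lemma eS_mul {I : H} (hI : I ∈ Sph) (z w : ℂ) : eS I (z * w) = eS I z * eS I w := by
  obtain ⟨h0, h1⟩ := (mem_sph_iff I).1 hI
  simp only [eS, Complex.mul_re, Complex.mul_im]
  ext <;>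
    simp only [Quaternion.re_mul, Quaternion.imI_mul, Quaternion.imJ_mul, Quaternion.imK_mul,
      Quaternion.re_add, Quaternion.imI_add, Quaternion.imJ_add, Quaternion.imK_add,
      Quaternion.re_coe, Quaternion.imI_coe, Quaternion.imJ_coe, Quaternion.imK_coe,
      Quaternion.re_smul, Quaternion.imI_smul, Quaternion.imJ_smul, Quaternion.imK_smul,
      smul_eq_mul, h0]
  · linear_combination (z.im * w.im) * h1
  · ring
  · ring
  · ring

lemma eS_smul_real (I : H) (r : ℝ) (z : ℂ) : eS I (r • z) = r • eS I z := by
  simp only [eS, Complex.smul_re, Complex.smul_im, smul_eq_mul, smul_add, smul_smul]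
  push_cast
  congr 1
  norm_cast

lemma eS_one (I : H) : eS I 1 = 1 := by simp [eS]
lemma eS_zero (I : H) : eS I 0 = 0 := by simp [eS]
lemma eS_I {I : H} : eS I Complex.I = I := by simp [eS]

lemma eS_injective {I : H} (hI : I ∈ Sph) : Function.Injective (eS I) := by
  intro z w h
  have h0 := sph_re hI
  have hre : (eS I z).re = (eS I w).re := by rw [h]
  have hiI : (eS I z).imI = (eS I w).imI := by rw [h]
  have hiJ : (eS I z).imJ = (eS I w).imJ := by rw [h]
  have hiK : (eS I z).imK = (eS I w).imK := by rw [h]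
  simp only [eS, Quaternion.re_add, Quaternion.imI_add, Quaternion.imJ_add, Quaternion.imK_add,
    Quaternion.re_coe, Quaternion.imI_coe, Quaternion.imJ_coe, Quaternion.imK_coe,
    Quaternion.re_smul, Quaternion.imI_smul, Quaternion.imJ_smul, Quaternion.imK_smul,
    smul_eq_mul, h0, mul_zero, add_zero, zero_add] at hre hiI hiJ hiK
  have h1 := sph_normSq hI
  have him : z.im = w.im := by
    by_contra hne
    have hI0 : I.imI = 0 := by
      by_contra hI0
      exact hne (mul_right_cancel₀ hI0 hiI)
    have hJ0 : I.imJ = 0 := by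
      by_contra hJ0
      exact hne (mul_right_cancel₀ hJ0 hiJ)
    have hK0 : I.imK = 0 := by
      by_contra hK0
      exact hne (mul_right_cancel₀ hK0 hiK)
    rw [hI0, hJ0, hK0] at h1
    norm_num at h1
  exact Complex.ext hre him

def eR {I : H} (hI : I ∈ Sph) : ℂ →+* H where
  toFun := eS I
  map_one' := eS_one I
  map_mul' := eS_mul hI
  map_zero' := eS_zero I
  map_add' := eS_add I

lemma norm_eS {I : H} (hI : I ∈ Sph) (z : ℂ) : ‖eS I z‖ = ‖z‖ := by
  have h1 : Quaternion.normSq (eS I z) = z.re^2 + z.im^2 := by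
    rw [Quaternion.normSq_def']
    simp [eS, Quaternion.re_smul, Quaternion.imI_smul, Quaternion.imJ_smul, Quaternion.imK_smul,
      sph_re hI]
    nlinarith [sph_normSq hI]
  have h2 : ‖eS I z‖ * ‖eS I z‖ = ‖z‖ * ‖z‖ := by
    rw [← Quaternion.normSq_eq_norm_mul_self, h1, ← pow_two, ← Complex.normSq_eq_norm_sq,
      Complex.normSq_apply]
    ring
  nlinarith [norm_nonneg (eS I z), norm_nonneg z]

def eL {I : H} (hI : I ∈ Sph) : ℂ →ₗ[ℝ] H where
  toFun := eS I
  map_add' := eS_add I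
  map_smul' := eS_smul_real I

lemma slice_eq_range {I : H} : Slice I = Set.range (eS I) := by
  ext q; constructor
  · rintro ⟨x, y, rfl⟩; exact ⟨⟨x, y⟩, rfl⟩
  · rintro ⟨z, rfl⟩; exact ⟨z.re, z.im, rfl⟩

lemma mem_slice_coords {I q : H} (h : q ∈ Slice I) : ∃ z : ℂ, q = eS I z := by
  rw [slice_eq_range] at h
  obtain ⟨z, hz⟩ := h
  exact ⟨z, hz.symm⟩

/-! ### pair algebra -/

section Pair
variable {I J : H}

lemma eS_mul' (hI : I ∈ Sph) (z w : ℂ) : eS I z * eS I w = eS I (z * w) := (eS_mul hI z w).symm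

lemma eS_sub' (z w : ℂ) : eS I z - eS I w = eS I (z - w) := by
  rw [sub_eq_iff_eq_add, ← eS_add, sub_add_cancel]

lemma eS_add' (z w : ℂ) : eS I z + eS I w = eS I (z + w) := (eS_add I z w).symm

lemma star_eS (hI : I ∈ Sph) (z : ℂ) : star (eS I z) = eS I (starRingEnd ℂ z) := by
  have h0 := sph_re hI
  ext <;> simp [eS, h0, Quaternion.re_smul, Quaternion.imI_smul, Quaternion.imJ_smul,
    Quaternion.imK_smul]

lemma eS_smul' (hI : I ∈ Sph) (r : ℝ) (z : ℂ) : r • eS I z = eS I ((r : ℂ) * z) := by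
  rw [← eS_smul_real]; norm_cast

lemma J_comm (hI : I ∈ Sph) (hJ : J ∈ Sph) (horth : (I * star J).re = 0) (z : ℂ) :
    J * eS I z = eS I (starRingEnd ℂ z) * J := by
  have ha := anticomm hI hJ horth
  rw [eS, eS, mul_add, add_mul, Complex.conj_re, Complex.conj_im]
  congr 1
  · exact (Quaternion.coe_commutes z.re J).symm
  · simp only [mul_smul_comm, smul_mul_assoc, ha, smul_neg, neg_smul, neg_mul]

lemma pmul (hI : I ∈ Sph) (hJ : J ∈ Sph) (horth : (I * star J).re = 0) (a b c d : ℂ) :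
    (eS I a + eS I b * J) * (eS I c + eS I d * J)
      = eS I (a * c - b * starRingEnd ℂ d) + eS I (a * d + b * starRingEnd ℂ c) * J := by
  have hJJ := sph_mul_self hJ
  rw [add_mul, mul_add, mul_add]
  have t2 : eS I a * (eS I d * J) = eS I (a * d) * J := by rw [← mul_assoc, eS_mul' hI]
  have t3 : eS I b * J * eS I c = eS I (b * starRingEnd ℂ c) * J := by
    rw [mul_assoc, J_comm hI hJ horth, ← mul_assoc, eS_mul' hI]
  have t4 : eS I b * J * (eS I d * J) = -eS I (b * starRingEnd ℂ d) := by
    rw [mul_assoc, ← mul_assoc J, J_comm hI hJ horth, mul_assoc, hJJ, mul_neg_one, mul_neg,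
      eS_mul' hI]
  rw [eS_mul' hI, t2, t3, t4]
  conv_rhs => rw [← eS_sub', ← eS_add', add_mul]
  abel

lemma padd (a b c d : ℂ) :
    (eS I a + eS I b * J) + (eS I c + eS I d * J) = eS I (a + c) + eS I (b + d) * J := by
  rw [← eS_add', ← eS_add', add_mul]; abel

lemma psub (a b c d : ℂ) :
    (eS I a + eS I b * J) - (eS I c + eS I d * J) = eS I (a - c) + eS I (b - d) * J := by
  rw [← eS_sub', ← eS_sub', sub_mul]; abel

lemma pcongr {a b c d : ℂ} (h1 : a = c) (h2 : b = d) :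
    eS I a + eS I b * J = eS I c + eS I d * J := by rw [h1, h2]

lemma psmul (hI : I ∈ Sph) (r : ℝ) (a b : ℂ) :
    r • (eS I a + eS I b * J) = eS I ((r : ℂ) * a) + eS I ((r : ℂ) * b) * J := by
  rw [smul_add, ← smul_mul_assoc, eS_smul' hI, eS_smul' hI]

lemma I_mul_eS (hI : I ∈ Sph) (z : ℂ) : I * eS I z = eS I (Complex.I * z) := by
  have h := eS_mul hI Complex.I z
  rw [eS_I] at h
  exact h.symm

lemma pImul (hI : I ∈ Sph) (a b : ℂ) :
    I * (eS I a + eS I b * J) = eS I (Complex.I * a) + eS I (Complex.I * b) * J := by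
  rw [mul_add, ← mul_assoc, I_mul_eS hI, I_mul_eS hI]

end Pair

/-! ### identity principle on a slice -/

lemma slice_zero (Ω : Set H) (hopen : IsOpen Ω) {K : H} (hK : K ∈ Sph)
    (hconn : IsConnected (Ω ∩ Slice K)) (v : ℝ × ℝ → H)
    (hv : ∀ p : ℝ × ℝ, (p.1 : H) + p.2 • K ∈ Ω →
      DifferentiableAt ℝ v p ∧
      fderiv ℝ v p (1, 0) + K * fderiv ℝ v p (0, 1) = 0)
    (hvan : ∀ x : ℝ, (x : H) ∈ Ω → v (x, 0) = 0)
    (x₀ : ℝ) (hx₀ : (x₀ : H) ∈ Ω) :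
    ∀ p : ℝ × ℝ, (p.1 : H) + p.2 • K ∈ Ω → v p = 0 := by
  letI : Module ℂ H := Module.compHom H (eR hK)
  haveI hsmul : ∀ (c : ℂ) (h : H), c • h = eS K c * h := fun c h => rfl
  letI : NormedSpace ℂ H := by
    refine ⟨fun c h => ?_⟩
    rw [hsmul, norm_mul, norm_eS hK]
  letI : IsScalarTower ℝ ℂ H := by
    refine ⟨fun r c h => ?_⟩
    rw [hsmul, hsmul, ← smul_mul_assoc, ← eS_smul_real]
  set w : ℂ → H := fun z => v (z.re, z.im) with hw
  set U : Set ℂ := {z : ℂ | (z.re : H) + z.im • K ∈ Ω} with hU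
  have hUopen : IsOpen U := by
    have hcont : Continuous fun z : ℂ => (z.re : H) + z.im • K := by
      continuity
    exact hcont.isOpen_preimage Ω hopen
  have hUpre : IsPreconnected U := by
    have hinj : Function.Injective (eL hK) := eS_injective hK
    have hemb := (eL hK).isClosedEmbedding_of_injective (LinearMap.ker_eq_bot.mpr hinj)
    have himage : (eL hK) '' U = Ω ∩ Slice K := by
      ext q; constructor
      · rintro ⟨z, hz, rfl⟩
        exact ⟨hz, z.re, z.im, rfl⟩
      · rintro ⟨hq, x, y, rfl⟩
        exact ⟨⟨x, y⟩, by simpa [hU, eL, eS] using hq, rfl⟩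
    have := hemb.toIsInducing.isPreconnected_image (s := U)
    rw [himage] at this
    exact this.mp hconn.isPreconnected
  have hdiffC : DifferentiableOn ℂ w U := by
    intro z hz
    obtain ⟨hd, hcr⟩ := hv (z.re, z.im) hz
    set L := fderiv ℝ v (z.re, z.im) with hL
    have hL01 : L (0, 1) = K * L (1, 0) := by
      have : L (1, 0) = - (K * L (0,1)) := eq_neg_of_add_eq_zero_left hcr
      have h2 : K * K = -1 := sph_mul_self hK
      calc L (0,1) = -(-1 : H) * L (0,1) := by simp
        _ = -(K*K) * L (0,1) := by rw [h2]
        _ = K * (-(K * L (0,1))) := by noncomm_ring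
        _ = K * L (1, 0) := by rw [← this]
    set g' : ℂ →L[ℂ] H := (1 : ℂ →L[ℂ] ℂ).smulRight (L (1, 0)) with hg'
    have hreal : HasFDerivAt w (L.comp (Complex.equivRealProdCLM : ℂ ≃L[ℝ] ℝ × ℝ).toContinuousLinearMap) z := by
      have h1 : HasFDerivAt v L (z.re, z.im) := hd.hasFDerivAt
      have h2 : HasFDerivAt (fun z : ℂ => (z.re, z.im)) (Complex.equivRealProdCLM : ℂ ≃L[ℝ] ℝ × ℝ).toContinuousLinearMap z :=
        (Complex.equivRealProdCLM.toContinuousLinearMap).hasFDerivAt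
      exact h1.comp z h2
    have hEq : g'.restrictScalars ℝ = L.comp (Complex.equivRealProdCLM : ℂ ≃L[ℝ] ℝ × ℝ).toContinuousLinearMap := by
      apply ContinuousLinearMap.ext
      intro c
      have hc : (c.re, c.im) = c.re • ((1:ℝ), (0:ℝ)) + c.im • ((0:ℝ), (1:ℝ)) := by
        simp [Prod.ext_iff]
      have : L (c.re, c.im) = c.re • L (1, 0) + c.im • L (0, 1) := by
        rw [hc, map_add, map_smul, map_smul]
      simp only [ContinuousLinearMap.coe_restrictScalars', ContinuousLinearMap.coe_comp',
        Function.comp_apply, ContinuousLinearEquiv.coe_coe]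
      rw [show (Complex.equivRealProdCLM : ℂ ≃L[ℝ] ℝ × ℝ) c = (c.re, c.im) from rfl, this]
      rw [ContinuousLinearMap.smulRight_apply, ContinuousLinearMap.one_apply]
      rw [hsmul, hL01, eS, add_mul, smul_mul_assoc]
      congr 1
      exact Quaternion.coe_mul_eq_smul _ _
    have hC : HasFDerivAt (𝕜 := ℂ) w g' z :=
      hasFDerivAt_of_restrictScalars ℝ hreal hEq
    exact hC.differentiableAt.differentiableWithinAt
  have hAn : AnalyticOnNhd ℂ w U := hdiffC.analyticOnNhd hUopen
  have hx₀U : ((x₀ : ℂ)) ∈ U := by simpa [hU] using hx₀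
  have hfreq : ∃ᶠ z in nhdsWithin (x₀ : ℂ) {(x₀ : ℂ)}ᶜ, w z = 0 := by
    rw [Filter.frequently_iff]
    intro s hs
    rw [mem_nhdsWithin] at hs
    obtain ⟨t, ht, hxt, hts⟩ := hs
    obtain ⟨δ, hδ, hball⟩ := Metric.isOpen_iff.1 ht _ hxt
    obtain ⟨ε, hε, hball2⟩ := Metric.isOpen_iff.1 hopen _ hx₀
    have hmin : 0 < min δ ε := lt_min hδ hε
    set r := min δ ε / 2 with hr
    have hrpos : 0 < r := by positivity
    have hrδ : r < δ := by
      have := min_le_left δ ε; simp only [hr]; linarith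
    have hrε : r < ε := by
      have := min_le_right δ ε; simp only [hr]; linarith
    refine ⟨((x₀ + r : ℝ) : ℂ), hts ⟨hball ?_, ?_⟩, ?_⟩
    · rw [Metric.mem_ball]
      have h1 : dist ((x₀ + r : ℝ) : ℂ) ((x₀ : ℝ) : ℂ) = |r| := by
        rw [Complex.dist_eq, show ((x₀ + r : ℝ) : ℂ) - ((x₀ : ℝ) : ℂ) = ((r : ℝ) : ℂ) by push_cast; ring,
          Complex.norm_real, Real.norm_eq_abs]
      rw [h1, abs_of_pos hrpos]
      exact hrδ
    · simp only [Set.mem_compl_iff, Set.mem_singleton_iff]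
      intro hcontra
      have : (x₀ + r : ℝ) = x₀ := by exact_mod_cast hcontra
      linarith
    · have hmem : ((x₀ + r : ℝ) : H) ∈ Ω := by
        apply hball2
        rw [Metric.mem_ball]
        have : dist ((x₀ + r : ℝ) : H) ((x₀ : ℝ) : H) = |r| := by
          rw [dist_eq_norm]
          rw [show ((x₀ + r : ℝ) : H) - ((x₀ : ℝ) : H) = ((r : ℝ) : H) by push_cast; abel]
          rw [Quaternion.norm_coe, Real.norm_eq_abs]
        rw [this, abs_of_pos hrpos]
        exact hrε
      have := hvan (x₀ + r) hmem
      simpa [hw] using this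
  have hEqOn := hAn.eqOn_zero_of_preconnected_of_frequently_eq_zero hUpre hx₀U hfreq
  intro p hp
  have hpU : (⟨p.1, p.2⟩ : ℂ) ∈ U := by simpa [hU] using hp
  have := hEqOn hpU
  simpa [hw] using this

/-! ### representation formula -/

lemma mul_mul_self_left {K : H} (hK : K ∈ Sph) (X : H) : K * (K * X) = -X := by
  rw [← mul_assoc, sph_mul_self hK]; simp

lemma cr_solve {I A B : H} (hI : I ∈ Sph) (h : A + I * B = 0) : B = I * A := by
  have h1 : I * A + I * (I * B) = 0 := by
    rw [← mul_add, h, mul_zero]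
  rw [mul_mul_self_left hI] at h1
  linear_combination (norm := abel) -h1

lemma cr_combine {K I : H} (hK : K ∈ Sph) (hI : I ∈ Sph) (A A' G1 G2 : H)
    (hG : G1 + K * G2 = 0) :
    (G1 - ((2:ℝ)⁻¹ • (A + A') + (K * I) * ((2:ℝ)⁻¹ • (A' - A))))
      + K * (G2 - ((2:ℝ)⁻¹ • (I * A + -(I * A')) + (K * I) * ((2:ℝ)⁻¹ • (-(I * A') - I * A)))) = 0 := by
  have e1 : (K * I) * ((2:ℝ)⁻¹ • (A' - A)) = (2:ℝ)⁻¹ • (K * (I * A') - K * (I * A)) := by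
    rw [mul_smul_comm]; congr 1; noncomm_ring
  have e2 : K * ((2:ℝ)⁻¹ • (I * A + -(I * A'))) = (2:ℝ)⁻¹ • (K * (I * A) - K * (I * A')) := by
    rw [mul_smul_comm]; congr 1; noncomm_ring
  have e3 : K * ((K * I) * ((2:ℝ)⁻¹ • (-(I * A') - I * A))) = -((2:ℝ)⁻¹ • (A' + A)) := by
    rw [mul_smul_comm, mul_smul_comm, ← smul_neg]
    congr 1
    have h1 : K * (K * I * (-(I * A') - I * A)) = (K * K) * (I * (-(I * A') - I * A)) := by
      noncomm_ring
    have h2 : I * (-(I * A') - I * A) = -(I * (I * A')) - I * (I * A) := by noncomm_ring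
    rw [h1, h2, mul_mul_self_left hI, mul_mul_self_left hI, sph_mul_self hK]
    noncomm_ring
  calc (G1 - ((2:ℝ)⁻¹ • (A + A') + (K * I) * ((2:ℝ)⁻¹ • (A' - A))))
      + K * (G2 - ((2:ℝ)⁻¹ • (I * A + -(I * A')) + (K * I) * ((2:ℝ)⁻¹ • (-(I * A') - I * A))))
      = (G1 + K * G2) - ((2:ℝ)⁻¹ • (A + A') + (K * I) * ((2:ℝ)⁻¹ • (A' - A))
          + (K * ((2:ℝ)⁻¹ • (I * A + -(I * A'))) + K * ((K * I) * ((2:ℝ)⁻¹ • (-(I * A') - I * A))))) := by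
        rw [mul_sub, mul_add]; abel
    _ = 0 := by
        rw [hG, e1, e2, e3, zero_sub, neg_eq_zero]
        module

lemma half_smul_same (X : H) : (2:ℝ)⁻¹ • (X + X) = X := by
  rw [← two_smul ℝ X, smul_smul]; norm_num

lemma rep_formula (Ω : Set H) (hopen : IsOpen Ω) (hsym : AxSymm Ω)
    (hslice : ∀ K ∈ Sph, IsConnected (Ω ∩ Slice K))
    (hreal : ∃ x₀ : ℝ, (x₀ : H) ∈ Ω)
    {u : H → H} (hu : SliceRegular Ω u) {I K : H} (hI : I ∈ Sph) (hK : K ∈ Sph) :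
    ∀ x y : ℝ, (x : H) + y • K ∈ Ω →
      u ((x : H) + y • K) = (2:ℝ)⁻¹ • (u ((x : H) + y • I) + u ((x : H) + (-y) • I))
        + (K * I) * ((2:ℝ)⁻¹ • (u ((x : H) + (-y) • I) - u ((x : H) + y • I))) := by
  classical
  set α : ℝ × ℝ → H := fun p => u ((p.1 : H) + p.2 • I) with hα
  set β : ℝ × ℝ → H := fun p => u ((p.1 : H) + (-p.2) • I) with hβ
  set γ : ℝ × ℝ → H := fun p => u ((p.1 : H) + p.2 • K) with hγdef
  set v : ℝ × ℝ → H := fun p =>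
    γ p - ((2:ℝ)⁻¹ • (α p + β p) + (K * I) * ((2:ℝ)⁻¹ • (β p - α p))) with hv
  have key : ∀ p : ℝ × ℝ, (p.1 : H) + p.2 • K ∈ Ω → v p = 0 := by
    apply slice_zero Ω hopen hK (hslice K hK)
    · rintro ⟨x, y⟩ hp
      simp only at hp
      have hmI : (x : H) + y • I ∈ Ω := hsym x y K hK hp I hI
      have hmI' : (x : H) + (-y) • I ∈ Ω := by
        have h1 : (x : H) + y • (-I) ∈ Ω := hsym x y K hK hp (-I) (sph_neg hI)
        rwa [smul_neg, ← neg_smul] at h1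
      obtain ⟨dα, crα⟩ := hu I hI x y hmI
      obtain ⟨dα', crα'⟩ := hu I hI x (-y) hmI'
      obtain ⟨dγ, crγ⟩ := hu K hK x y hp
      set Lα := fderiv ℝ (fun p : ℝ × ℝ => u ((p.1 : H) + p.2 • I)) (x, y) with hLα
      set Lα' := fderiv ℝ (fun p : ℝ × ℝ => u ((p.1 : H) + p.2 • I)) (x, -y) with hLα'
      set Lγ := fderiv ℝ (fun p : ℝ × ℝ => u ((p.1 : H) + p.2 • K)) (x, y) with hLγ
      set N : ℝ × ℝ →L[ℝ] ℝ × ℝ :=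
        (ContinuousLinearMap.fst ℝ ℝ ℝ).prod (-(ContinuousLinearMap.snd ℝ ℝ ℝ)) with hN
      have hNapp : ∀ q : ℝ × ℝ, N q = (q.1, -q.2) := fun q => rfl
      have hβd : HasFDerivAt β (Lα'.comp N) (x, y) := by
        have h0 : HasFDerivAt (fun p : ℝ × ℝ => u ((p.1 : H) + p.2 • I)) Lα' (x, -y) :=
          dα'.hasFDerivAt
        have hNd : HasFDerivAt (fun q : ℝ × ℝ => ((q.1 : ℝ), -q.2)) N (x, y) := by
          have := N.hasFDerivAt (x := (x, y))
          convert this using 2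
          exact (hNapp _).symm
        have := h0.comp (x, y) hNd
        exact this
      have hαd : HasFDerivAt α Lα (x, y) := dα.hasFDerivAt
      have hγd : HasFDerivAt γ Lγ (x, y) := dγ.hasFDerivAt
      set Lv : ℝ × ℝ →L[ℝ] H :=
        Lγ - ((2:ℝ)⁻¹ • (Lα + Lα'.comp N) + (K * I) • ((2:ℝ)⁻¹ • (Lα'.comp N - Lα))) with hLv
      have hvd : HasFDerivAt v Lv (x, y) := by
        exact hγd.sub ((((hαd.add hβd).const_smul ((2:ℝ)⁻¹)).add
          (((hβd.sub hαd).const_smul ((2:ℝ)⁻¹)).const_mul (K * I))))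
      constructor
      · exact hvd.differentiableAt
      · rw [hvd.fderiv]
        have hval : ∀ q : ℝ × ℝ, Lv q
            = Lγ q - ((2:ℝ)⁻¹ • (Lα q + Lα' (N q)) + (K * I) * ((2:ℝ)⁻¹ • (Lα' (N q) - Lα q))) := by
          intro q
          simp [hLv, ContinuousLinearMap.sub_apply, ContinuousLinearMap.add_apply,
            ContinuousLinearMap.smul_apply, ContinuousLinearMap.comp_apply, smul_eq_mul]
        rw [hval, hval]
        rw [hNapp, hNapp]
        rw [show (((1:ℝ),(0:ℝ)).1, -((1:ℝ),(0:ℝ)).2) = ((1:ℝ),(0:ℝ)) by norm_num]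
        rw [show (((0:ℝ),(1:ℝ)).1, -((0:ℝ),(1:ℝ)).2) = ((0:ℝ),(-1:ℝ)) by norm_num]
        have hA01 : Lα (0, 1) = I * Lα (1, 0) := cr_solve hI crα
        have hA01' : Lα' (0, 1) = I * Lα' (1, 0) := cr_solve hI crα'
        have hneg : Lα' ((0:ℝ), (-1:ℝ)) = -Lα' (0, 1) := by
          rw [show ((0:ℝ), (-1:ℝ)) = -((0:ℝ), (1:ℝ)) by simp, map_neg]
        rw [hneg, hA01, hA01']
        exact cr_combine hK hI (Lα (1,0)) (Lα' (1,0)) (Lγ (1,0)) (Lγ (0,1)) crγ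
    · intro x hx
      simp only [hv, hγdef, hα, hβ, neg_zero, zero_smul, add_zero]
      rw [sub_self, smul_zero, mul_zero, add_zero, half_smul_same, sub_self]
    · exact hreal.choose_spec
  intro x y hxy
  have := key (x, y) hxy
  simp only [hv, hγdef, hα, hβ] at this
  exact sub_eq_zero.mp this

/-! ### main algebraic identity -/

lemma main_alg {I J : H} (hI : I ∈ Sph) (hJ : J ∈ Sph) (horth : (I * star J).re = 0)
    (A B C D A2 B2 C2 D2 : ℂ) :
    ((2:ℝ)⁻¹ • (((eS I A * eS I C - eS I B * star (eS I D2))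
          + (eS I A * eS I D + eS I B * star (eS I C2)) * J)
        + ((eS I A2 * eS I C2 - eS I B2 * star (eS I D))
          + (eS I A2 * eS I D2 + eS I B2 * star (eS I C)) * J))
      = ((2:ℝ)⁻¹ • ((eS I A + eS I B * J) + (eS I A2 + eS I B2 * J)))
          * ((2:ℝ)⁻¹ • ((eS I C + eS I D * J) + (eS I C2 + eS I D2 * J)))
        - (I * ((2:ℝ)⁻¹ • ((eS I A2 + eS I B2 * J) - (eS I A + eS I B * J))))
          * (I * ((2:ℝ)⁻¹ • ((eS I C2 + eS I D2 * J) - (eS I C + eS I D * J)))))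
    ∧ (I * ((2:ℝ)⁻¹ • ((((eS I A2 * eS I C2 - eS I B2 * star (eS I D))
            + (eS I A2 * eS I D2 + eS I B2 * star (eS I C)) * J))
          - ((eS I A * eS I C - eS I B * star (eS I D2))
            + (eS I A * eS I D + eS I B * star (eS I C2)) * J)))
      = (I * ((2:ℝ)⁻¹ • ((eS I A2 + eS I B2 * J) - (eS I A + eS I B * J))))
          * ((2:ℝ)⁻¹ • ((eS I C + eS I D * J) + (eS I C2 + eS I D2 * J)))
        + ((2:ℝ)⁻¹ • ((eS I A + eS I B * J) + (eS I A2 + eS I B2 * J)))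
          * (I * ((2:ℝ)⁻¹ • ((eS I C2 + eS I D2 * J) - (eS I C + eS I D * J))))) := by
  have hzp : (eS I A * eS I C - eS I B * star (eS I D2))
      + (eS I A * eS I D + eS I B * star (eS I C2)) * J
      = eS I (A * C - B * starRingEnd ℂ D2) + eS I (A * D + B * starRingEnd ℂ C2) * J := by
    rw [star_eS hI, star_eS hI, eS_mul' hI, eS_mul' hI, eS_mul' hI, eS_mul' hI,
      eS_sub', eS_add']
  have hzp2 : (eS I A2 * eS I C2 - eS I B2 * star (eS I D))
      + (eS I A2 * eS I D2 + eS I B2 * star (eS I C)) * J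
      = eS I (A2 * C2 - B2 * starRingEnd ℂ D) + eS I (A2 * D2 + B2 * starRingEnd ℂ C) * J := by
    rw [star_eS hI, star_eS hI, eS_mul' hI, eS_mul' hI, eS_mul' hI, eS_mul' hI,
      eS_sub', eS_add']
  rw [hzp, hzp2]
  constructor
  · rw [padd, psmul hI, padd, psmul hI, padd, psmul hI,
      psub, psmul hI, pImul hI, psub, psmul hI,
      pImul hI, pmul hI hJ horth, pmul hI hJ horth, psub]
    refine pcongr ?_ ?_ <;>
      · simp only [map_mul, map_add, map_sub, Complex.conj_ofReal, Complex.conj_I, map_neg]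
        push_cast
        ring_nf
        try simp only [Complex.I_sq]
        try push_cast
        try ring
  · rw [psub, psmul hI, pImul hI, psub, psmul hI,
      pImul hI, padd, psmul hI, padd, psmul hI,
      psub, psmul hI, pImul hI, pmul hI hJ horth, pmul hI hJ horth,
      padd]
    refine pcongr ?_ ?_ <;>
      · simp only [map_mul, map_add, map_sub, Complex.conj_ofReal, Complex.conj_I, map_neg]
        push_cast
        ring_nf
        try simp only [Complex.I_sq]
        try push_cast
        try ring

/-! ### assembly lemmas -/

lemma assemble {I' : H} (hI' : I' ∈ Sph) {fq hq2 Sf Df Sg Dg : H}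
    (hfq : fq = Sf + I' * Df)
    (hhq : hq2 = (Sf * Sg - Df * Dg) + I' * (Df * Sg + Sf * Dg)) :
    hq2 = fq * Sg + I' * (fq * Dg) := by
  rw [hhq, hfq]
  have e1 : I' * ((I' * Df) * Dg) = -(Df * Dg) := by
    rw [← mul_assoc, ← mul_assoc, sph_mul_self hI']
    noncomm_ring
  have expand : I' * ((Sf + I' * Df) * Dg) = I' * (Sf * Dg) + I' * ((I' * Df) * Dg) := by
    noncomm_ring
  rw [expand, e1]
  noncomm_ring

lemma assemble2 {I' : H} {fq gqt hq2 Sg Dg : H} (hf0 : fq ≠ 0)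
    (hgq : gqt = Sg + (fq⁻¹ * I' * fq) * Dg)
    (hkey : hq2 = fq * Sg + I' * (fq * Dg)) : hq2 = fq * gqt := by
  have h1 : fq * (fq⁻¹ * I' * fq) = I' * fq := by
    rw [← mul_assoc, ← mul_assoc, mul_inv_cancel₀ hf0, one_mul]
  rw [hkey, hgq, mul_add]
  congr 1
  calc I' * (fq * Dg) = (I' * fq) * Dg := (mul_assoc _ _ _).symm
    _ = (fq * (fq⁻¹ * I' * fq)) * Dg := by rw [h1]
    _ = fq * ((fq⁻¹ * I' * fq) * Dg) := mul_assoc _ _ _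

end Aux

/-- formula and zeros of the regular product:
`f*g(q) = 0` if `f(q) = 0`, `f*g(q) = f(q)·g(f(q)⁻¹ q f(q))` otherwise;
and the characterization of the zeros of `f*g`. -/
theorem regular_product_formula_and_zeros (Ω : Set H) (hΩ : IsSymmSliceDomain Ω)
    (f g h : H → H) (hf : SliceRegular Ω f) (hg : SliceRegular Ω g)
    (hprod : IsRegularProduct Ω f g h) :
    ∀ q ∈ Ω,
      (f q = 0 → h q = 0) ∧
      (f q ≠ 0 → h q = f q * g ((f q)⁻¹ * q * f q)) ∧
      (h q = 0 ↔ f q = 0 ∨ (f q ≠ 0 ∧ g ((f q)⁻¹ * q * f q) = 0)) := by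
  intro q hq
  obtain ⟨⟨hopen, hconn, hrealax, hslice⟩, hsym⟩ := hΩ
  obtain ⟨q₀, hq₀Ω, x₀, hx₀eq⟩ := hrealax
  have hx₀ : ((x₀ : ℝ) : H) ∈ Ω := hx₀eq ▸ hq₀Ω
  have hrealpt : ∃ t : ℝ, (t : H) ∈ Ω := ⟨x₀, hx₀⟩
  obtain ⟨hregh, I, hI, J, hJ, horth, F, G, F', G', hsF, hsG, hform⟩ := hprod
  obtain ⟨x, y, I', hI', rfl⟩ := Aux.exists_decomp q
  -- memberships of the base slice points
  have hzΩ : (x : H) + y • I ∈ Ω := hsym x y I' hI' hq I hI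
  have hz2Ω : (x : H) + (-y) • I ∈ Ω := by
    have h1 := hsym x y I' hI' hq (-I) (Aux.sph_neg hI)
    rwa [smul_neg, ← neg_smul] at h1
  have mz : (x : H) + y • I ∈ Ω ∩ Slice I := ⟨hzΩ, x, y, rfl⟩
  have mz2 : (x : H) + (-y) • I ∈ Ω ∩ Slice I := ⟨hz2Ω, x, -y, rfl⟩
  -- complex coordinates of the splittings
  obtain ⟨A, hA⟩ := Aux.mem_slice_coords (hsF.mapsF _ mz)
  obtain ⟨B, hB⟩ := Aux.mem_slice_coords (hsF.mapsG _ mz)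
  obtain ⟨C, hC⟩ := Aux.mem_slice_coords (hsG.mapsF _ mz)
  obtain ⟨D, hD⟩ := Aux.mem_slice_coords (hsG.mapsG _ mz)
  obtain ⟨A2, hA2⟩ := Aux.mem_slice_coords (hsF.mapsF _ mz2)
  obtain ⟨B2, hB2⟩ := Aux.mem_slice_coords (hsF.mapsG _ mz2)
  obtain ⟨C2, hC2⟩ := Aux.mem_slice_coords (hsG.mapsF _ mz2)
  obtain ⟨D2, hD2⟩ := Aux.mem_slice_coords (hsG.mapsG _ mz2)
  have hstz : star ((x : H) + y • I) = (x : H) + (-y) • I := Aux.star_point hI x y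
  have hstz2 : star ((x : H) + (-y) • I) = (x : H) + y • I := by
    rw [Aux.star_point hI x (-y), neg_neg]
  -- slice values
  have hfz : f ((x : H) + y • I) = Aux.eS I A + Aux.eS I B * J := by
    rw [hsF.eq _ mz, hA, hB]
  have hfz2 : f ((x : H) + (-y) • I) = Aux.eS I A2 + Aux.eS I B2 * J := by
    rw [hsF.eq _ mz2, hA2, hB2]
  have hgz : g ((x : H) + y • I) = Aux.eS I C + Aux.eS I D * J := by
    rw [hsG.eq _ mz, hC, hD]
  have hgz2 : g ((x : H) + (-y) • I) = Aux.eS I C2 + Aux.eS I D2 * J := by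
    rw [hsG.eq _ mz2, hC2, hD2]
  have hhz : h ((x : H) + y • I)
      = (Aux.eS I A * Aux.eS I C - Aux.eS I B * star (Aux.eS I D2))
        + (Aux.eS I A * Aux.eS I D + Aux.eS I B * star (Aux.eS I C2)) * J := by
    have := hform _ mz
    rw [hstz, hA, hB, hC, hD, hC2, hD2] at this
    exact this
  have hhz2 : h ((x : H) + (-y) • I)
      = (Aux.eS I A2 * Aux.eS I C2 - Aux.eS I B2 * star (Aux.eS I D))
        + (Aux.eS I A2 * Aux.eS I D2 + Aux.eS I B2 * star (Aux.eS I C)) * J := by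
    have := hform _ mz2
    rw [hstz2, hA2, hB2, hC2, hD2, hC, hD] at this
    exact this
  -- representation formulas
  have RFf := Aux.rep_formula Ω hopen hsym hslice hrealpt hf hI hI' x y hq
  have RFh := Aux.rep_formula Ω hopen hsym hslice hrealpt hregh hI hI' x y hq
  rw [hfz, hfz2, mul_assoc I' I] at RFf
  rw [hhz, hhz2, mul_assoc I' I] at RFh
  obtain ⟨hMA1, hMA2⟩ := Aux.main_alg hI hJ horth A B C D A2 B2 C2 D2
  rw [hMA1, hMA2] at RFh
  have hkey := Aux.assemble hI' RFf RFh
  -- the three statements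
  have hzero : f ((x : H) + y • I') = 0 → h ((x : H) + y • I') = 0 := by
    intro hf0
    rw [hkey, hf0, zero_mul, zero_mul, mul_zero, add_zero]
  have hne : f ((x : H) + y • I') ≠ 0 →
      h ((x : H) + y • I') = f ((x : H) + y • I')
        * g ((f ((x : H) + y • I'))⁻¹ * ((x : H) + y • I') * f ((x : H) + y • I')) := by
    intro hf0
    have hI'' : (f ((x : H) + y • I'))⁻¹ * I' * f ((x : H) + y • I') ∈ Sph :=
      Aux.sph_conj hI' hf0
    have hqt : (f ((x : H) + y • I'))⁻¹ * ((x : H) + y • I') * f ((x : H) + y • I')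
        = (x : H) + y • ((f ((x : H) + y • I'))⁻¹ * I' * f ((x : H) + y • I')) :=
      Aux.conj_point hf0 x y
    have hqtΩ : (x : H) + y • ((f ((x : H) + y • I'))⁻¹ * I' * f ((x : H) + y • I')) ∈ Ω :=
      hsym x y I' hI' hq _ hI''
    have RFg := Aux.rep_formula Ω hopen hsym hslice hrealpt hg hI hI'' x y hqtΩ
    rw [hgz, hgz2,
      mul_assoc ((f ((x : H) + y • I'))⁻¹ * I' * f ((x : H) + y • I')) I] at RFg
    rw [hqt]
    exact Aux.assemble2 hf0 RFg hkey
  refine ⟨hzero, hne, ?_, ?_⟩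
  · intro hh0
    by_cases hf0 : f ((x : H) + y • I') = 0
    · exact Or.inl hf0
    · refine Or.inr ⟨hf0, ?_⟩
      rw [hne hf0] at hh0
      rcases mul_eq_zero.mp hh0 with h1 | h1
      · exact absurd h1 hf0
      · exact h1
  · rintro (hf0 | ⟨hf0, hg0⟩)
    · exact hzero hf0
    · rw [hne hf0, hg0, mul_zero]
end
end
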